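/- arXiv:2010.02641 — 4 statements merged into one kernel-verified Lean document; each statement's English description precedes it below -/
import Mathlib

section
/- Let 𝔯 be a totally real subspace of E, let T ∈ 𝔯, let W ∈ E be orthogonal to ℂ𝔯 = 𝔯 + J𝔯, and let y ∈ ℝ. Then the subspace exp(ad(2JT+2W+yZ))(ℝB ⊕ 𝔯) of 𝔰 is a CR subspace of 𝔰 if and only if T = 0; in that case it equals ℝ(B − W − yZ) ⊕ 𝔯 and is totally real. -/
open scoped RealInnerProductSpace

noncomputable section

namespace CHn

/-- `E n` is `ℂ^{n-1}`, viewed as a real inner product space with `⟪U,V⟫ = Re⟪U,V⟫_ℂ`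
and complex structure `JU = iU`. -/
abbrev E (n : ℕ) := EuclideanSpace ℂ (Fin (n - 1))

/-- The solvable part `𝔰 = 𝔞 ⊕ 𝔫` of the Iwasawa decomposition of `𝔰𝔲(1,n)`, modeled as
`ℝB ⊕ E ⊕ ℝZ`; the element `(a, U, x)` represents `aB + U + xZ`. -/
abbrev S (n : ℕ) := ℝ × E n × ℝ

variable (n : ℕ)

/-- The vector `B`. -/
def B : S n := (1, 0, 0)

/-- The vector `Z`. -/
def Z : S n := (0, 0, 1)

/-- The inner product of `𝔰` (`B`, `Z` unit, orthogonal direct sum `ℝB ⊕ E ⊕ ℝZ`). -/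
def sInner (X Y : S n) : ℝ := X.1 * Y.1 + ⟪X.2.1, Y.2.1⟫ + X.2.2 * Y.2.2

/-- The ambient complex structure on `𝔰`: `J(aB + U + xZ) = -xB + JU + aZ`. -/
def Js : S n →ₗ[ℝ] S n where
  toFun X := (-X.2.2, Complex.I • X.2.1, X.1)
  map_add' X Y := by
    refine Prod.ext ?_ (Prod.ext ?_ ?_)
    · simp; ring
    · simp [smul_add]
    · simp
  map_smul' c X := by
    refine Prod.ext ?_ (Prod.ext ?_ ?_)
    · simp only [Prod.smul_fst, Prod.smul_snd, smul_eq_mul, RingHom.id_apply]; ring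
    · simp [Prod.smul_fst, Prod.smul_snd, smul_comm c Complex.I]
    · simp

/-- The Lie bracket of `𝔰`:
`[aB + U + xZ, bB + V + yZ] = (1/2)(aV - bU) + (ay - bx + ⟪JU, V⟫)Z`. -/
def bra (X Y : S n) : S n :=
  (0, (2⁻¹ : ℝ) • (X.1 • Y.2.1 - Y.1 • X.2.1),
    X.1 * Y.2.2 - Y.1 * X.2.2 + ⟪Complex.I • X.2.1, Y.2.1⟫)

/-- `ad(X) = [X, ·]`, a (continuous) linear endomorphism of `𝔰`. -/
def ad (X : S n) : S n →L[ℝ] S n :=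
  LinearMap.toContinuousLinearMap
    { toFun := bra n X
      map_add' := fun Y Y' => by
        unfold bra
        refine Prod.ext ?_ (Prod.ext ?_ ?_)
        · simp
        · simp only [Prod.fst_add, Prod.snd_add]
          module
        · simp only [Prod.fst_add, Prod.snd_add, inner_add_right]
          ring
      map_smul' := fun c Y => by
        unfold bra
        have h : ⟪Complex.I • X.2.1, c • Y.2.1⟫ = c * ⟪Complex.I • X.2.1, Y.2.1⟫ :=
          real_inner_smul_right _ _ _
        refine Prod.ext ?_ (Prod.ext ?_ ?_)
        · simp
        · simp only [Prod.smul_fst, Prod.smul_snd, smul_eq_mul, RingHom.id_apply]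
          module
        · simp only [Prod.smul_fst, Prod.smul_snd, smul_eq_mul, h, RingHom.id_apply]
          ring }

/-- `exp(ad(X)) = Σ_{k ≥ 0} ad(X)^k / k!`. -/
def expAd (X : S n) : S n →L[ℝ] S n := NormedSpace.exp (ad n X)

/-- `ρ(t) = (e^t - 1)/t` for `t ≠ 0`, `ρ(0) = 1`. -/
def rho (t : ℝ) : ℝ := if t = 0 then 1 else (Real.exp t - 1) / t

/-- The Iwasawa group `AN`, modeled as `G = ℝ × E × ℝ`. -/
abbrev G (n : ℕ) := ℝ × E n × ℝ

/-- The product of `G`: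
`(a,P,p)·(b,Q,q) = (a+b, P + e^{a/2}Q, p + e^a q + (1/2)e^{a/2}⟪JP,Q⟫)`. -/
def gmul (g h : G n) : G n :=
  (g.1 + h.1, g.2.1 + Real.exp (g.1 / 2) • h.2.1,
    g.2.2 + Real.exp g.1 * h.2.2 + 2⁻¹ * Real.exp (g.1 / 2) * ⟪Complex.I • g.2.1, h.2.1⟫)

/-- The Lie exponential `Exp : 𝔰 → G`, `Exp(cB + W + zZ) = (c, ρ(c/2)W, ρ(c)z)`. -/
def Exp (X : S n) : G n := (X.1, rho (X.1 / 2) • X.2.1, rho X.1 * X.2.2)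

/-- The inclusion of `E` into `𝔰`. -/
def inE : E n →ₗ[ℝ] S n where
  toFun U := (0, U, 0)
  map_add' U V := by refine Prod.ext ?_ (Prod.ext ?_ ?_) <;> simp
  map_smul' c U := by refine Prod.ext ?_ (Prod.ext ?_ ?_) <;> simp

/-- A real subspace of `E` is totally real if `⟪Ju, v⟫ = 0` for all its elements. -/
def TotallyRealE (V : Submodule ℝ (E n)) : Prop :=
  ∀ u ∈ V, ∀ v ∈ V, ⟪Complex.I • u, v⟫ = 0

/-- A real subspace of `E` is complex if it is `J`-invariant. -/
def IsComplexE (V : Submodule ℝ (E n)) : Prop :=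
  ∀ u ∈ V, Complex.I • u ∈ V

/-- The maximal complex subspace `V ∩ JV` of a real subspace `V` of `E`. -/
def maxCE (V : Submodule ℝ (E n)) : Set (E n) := {w | w ∈ V ∧ Complex.I • w ∈ V}

/-- `V` is a CR subspace of `E` if the orthogonal complement in `V` of its maximal
complex subspace `V ∩ JV` is totally real. -/
def IsCRE (V : Submodule ℝ (E n)) : Prop :=
  ∀ u ∈ V, ∀ v ∈ V, (∀ w ∈ maxCE n V, ⟪u, w⟫ = 0) →
    (∀ w ∈ maxCE n V, ⟪v, w⟫ = 0) → ⟪Complex.I • u, v⟫ = 0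

/-- A subset of `𝔰` is totally real if `⟪Ju, v⟫ = 0` for all its elements. -/
def TotallyRealS (V : Set (S n)) : Prop := ∀ u ∈ V, ∀ v ∈ V, sInner n (Js n u) v = 0

/-- The maximal complex subspace `V ∩ JV` of a real subspace `V` of `𝔰`. -/
def maxCS (V : Set (S n)) : Set (S n) := {x | x ∈ V ∧ Js n x ∈ V}

/-- `V` is a CR subspace of `𝔰` if the orthogonal complement in `V` of its maximal
complex subspace `V ∩ JV` is totally real. -/
def IsCRS (V : Set (S n)) : Prop :=
  ∀ u ∈ V, ∀ v ∈ V, (∀ w ∈ maxCS n V, sInner n u w = 0) →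
    (∀ w ∈ maxCS n V, sInner n v w = 0) → sInner n (Js n u) v = 0


set_option maxHeartbeats 1000000 in
set_option synthInstance.maxHeartbeats 1000000 in
lemma exp_sq_zero {n : ℕ} (A : S n →L[ℝ] S n) (h : A * A = 0) :
    NormedSpace.exp A = 1 + A := by
  rw [NormedSpace.exp_eq_tsum ℝ]
  have hz : ∀ k ∉ ({0, 1} : Finset ℕ), ((k.factorial : ℝ))⁻¹ • A ^ k = 0 := by
    intro k hk
    simp only [Finset.mem_insert, Finset.mem_singleton] at hk
    push_neg at hk
    have hA : A ^ k = 0 := by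
      have hk2 : A ^ k = A ^ 2 * A ^ (k - 2) := by
        rw [← pow_add]; congr 1; omega
      rw [hk2, pow_two, h, zero_mul]
    rw [hA]
    exact smul_zero (M := ℝ) (A := S n →L[ℝ] S n) _
  show ∑' k : ℕ, ((k.factorial : ℝ))⁻¹ • A ^ k = 1 + A
  rw [tsum_eq_sum hz]
  simp [Finset.sum_pair (by norm_num : (0:ℕ) ≠ 1)]

lemma rIl {n : ℕ} (u v : E n) : ⟪Complex.I • u, v⟫ = -⟪u, Complex.I • v⟫ := by
  simp only [PiLp.inner_apply, PiLp.smul_apply, smul_eq_mul, Complex.inner]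
  rw [← Finset.sum_neg_distrib]
  congr 1; ext i
  simp [Complex.ext_iff]; ring

lemma rII {n : ℕ} (u v : E n) : ⟪Complex.I • u, Complex.I • v⟫ = ⟪u, v⟫ := by
  simp only [PiLp.inner_apply, PiLp.smul_apply, smul_eq_mul, Complex.inner]
  congr 1; ext i
  simp [Complex.ext_iff]

lemma rIself {n : ℕ} (u : E n) : ⟪Complex.I • u, u⟫ = 0 := by
  simp only [PiLp.inner_apply, PiLp.smul_apply, smul_eq_mul, Complex.inner]
  apply Finset.sum_eq_zero
  intro i _
  simp [Complex.ext_iff]; ring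

lemma Js_apply {n : ℕ} (v : S n) : Js n v = (-v.2.2, Complex.I • v.2.1, v.1) := rfl

lemma ad_apply' {n : ℕ} (X v : S n) : ad n X v = bra n X v := rfl

/-- The image of `(b, U, 0)` under `exp(ad(2JT+2W+yZ))` (for `U ∈ 𝔯`). -/
def Fv (n : ℕ) (T W : E n) (y : ℝ) (b : ℝ) (U : E n) : S n :=
  (b, U - b • (Complex.I • T + W), -(b * y) - 2 * ⟪T, U⟫)

section Aux

variable {n : ℕ} {𝔯 : Submodule ℝ (E n)} {T W : E n} {y : ℝ}

lemma adX_apply (v : S n) :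
    ad n ((0, (2 : ℝ) • (Complex.I • T) + (2 : ℝ) • W, y) : S n) v =
      (0, (-v.1) • (Complex.I • T + W),
        -(v.1 * y) + (-2 * ⟪T, v.2.1⟫ + 2 * ⟪Complex.I • W, v.2.1⟫)) := by
  rw [ad_apply']
  unfold bra
  have hI : Complex.I • ((2 : ℝ) • (Complex.I • T) + (2 : ℝ) • W) =
      (-2 : ℝ) • T + (2 : ℝ) • (Complex.I • W) := by
    rw [smul_add, smul_comm Complex.I (2 : ℝ), smul_comm Complex.I (2 : ℝ),
      smul_smul Complex.I Complex.I, Complex.I_mul_I, neg_one_smul]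
    module
  refine Prod.ext rfl (Prod.ext ?_ ?_)
  · show (2⁻¹ : ℝ) • ((0:ℝ) • v.2.1 - v.1 • ((2 : ℝ) • (Complex.I • T) + (2 : ℝ) • W))
      = (-v.1) • (Complex.I • T + W)
    module
  · show (0:ℝ) * v.2.2 - v.1 * y + ⟪Complex.I • ((2 : ℝ) • (Complex.I • T) + (2 : ℝ) • W), v.2.1⟫
      = -(v.1 * y) + (-2 * ⟪T, v.2.1⟫ + 2 * ⟪Complex.I • W, v.2.1⟫)
    rw [hI, inner_add_left, real_inner_smul_left, real_inner_smul_left]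
    ring

lemma adX_sq (h𝔯 : TotallyRealE n 𝔯) (hT : T ∈ 𝔯)
    (hW : ∀ u ∈ 𝔯, ⟪W, u⟫ = 0 ∧ ⟪W, Complex.I • u⟫ = 0) :
    ad n ((0, (2 : ℝ) • (Complex.I • T) + (2 : ℝ) • W, y) : S n) *
      ad n ((0, (2 : ℝ) • (Complex.I • T) + (2 : ℝ) • W, y) : S n) = 0 := by
  have h1 : ⟪T, Complex.I • T⟫ = 0 := by
    rw [real_inner_comm]; exact h𝔯 T hT T hT
  have h2 : ⟪T, W⟫ = 0 := by rw [real_inner_comm]; exact (hW T hT).1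
  have h3 : ⟪Complex.I • W, Complex.I • T⟫ = 0 := by
    rw [rII]; exact (hW T hT).1
  have h4 : ⟪Complex.I • W, W⟫ = 0 := rIself W
  refine ContinuousLinearMap.ext fun v => ?_
  rw [ContinuousLinearMap.mul_apply, adX_apply, adX_apply, ContinuousLinearMap.zero_apply]
  refine Prod.ext rfl (Prod.ext ?_ ?_)
  · show (-(0:ℝ)) • (Complex.I • T + W) = 0
    simp
  · show -((0:ℝ) * y) + (-2 * ⟪T, (-v.1) • (Complex.I • T + W)⟫ +
        2 * ⟪Complex.I • W, (-v.1) • (Complex.I • T + W)⟫) = 0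
    rw [real_inner_smul_right, real_inner_smul_right, inner_add_right, inner_add_right,
      h1, h2, h3, h4]
    ring

lemma expAd_apply (h𝔯 : TotallyRealE n 𝔯) (hT : T ∈ 𝔯)
    (hW : ∀ u ∈ 𝔯, ⟪W, u⟫ = 0 ∧ ⟪W, Complex.I • u⟫ = 0)
    (b : ℝ) {U : E n} (hU : U ∈ 𝔯) :
    expAd n ((0, (2 : ℝ) • (Complex.I • T) + (2 : ℝ) • W, y) : S n) ((b, U, 0) : S n) =
      Fv n T W y b U := by
  rw [expAd, exp_sq_zero _ (adX_sq h𝔯 hT hW), ContinuousLinearMap.add_apply,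
    ContinuousLinearMap.one_apply, adX_apply]
  have hIWU : ⟪Complex.I • W, U⟫ = 0 := by
    rw [rIl]
    simpa using (hW U hU).2
  unfold Fv
  refine Prod.ext ?_ (Prod.ext ?_ ?_)
  · show b + 0 = b; ring
  · show U + (-b) • (Complex.I • T + W) = U - b • (Complex.I • T + W)
    module
  · show (0:ℝ) + (-((b:ℝ) * y) + (-2 * ⟪T, U⟫ + 2 * ⟪Complex.I • W, U⟫)) = -(b * y) - 2 * ⟪T, U⟫
    rw [hIWU]; ring

lemma smul_one_add (b : ℝ) (U : E n) :
    b • ((1, -W, -y) : S n) + inE n U = ((b, U - b • W, -(b * y)) : S n) := by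
  refine Prod.ext ?_ (Prod.ext ?_ ?_)
  · show b * 1 + 0 = b; ring
  · show b • (-W) + U = U - b • W; module
  · show b * (-y) + 0 = -(b * y); ring

lemma smul_B_add (b : ℝ) (U : E n) :
    b • B n + inE n U = ((b, U, 0) : S n) := by
  refine Prod.ext ?_ (Prod.ext ?_ ?_)
  · show b * 1 + 0 = b; ring
  · show b • (0 : E n) + U = U; module
  · show b * 0 + 0 = 0; ring

lemma mem_V (h𝔯 : TotallyRealE n 𝔯) (hT : T ∈ 𝔯)
    (hW : ∀ u ∈ 𝔯, ⟪W, u⟫ = 0 ∧ ⟪W, Complex.I • u⟫ = 0) (v : S n) :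
    v ∈ Submodule.map
        (expAd n ((0, (2 : ℝ) • (Complex.I • T) + (2 : ℝ) • W, y) : S n)).toLinearMap
        (Submodule.span ℝ {B n} ⊔ Submodule.map (inE n) 𝔯) ↔
      ∃ b U, U ∈ 𝔯 ∧ v = Fv n T W y b U := by
  rw [Submodule.mem_map]
  constructor
  · rintro ⟨w, hw, rfl⟩
    rw [Submodule.mem_sup] at hw
    obtain ⟨s, hs, t, ht, rfl⟩ := hw
    obtain ⟨b, rfl⟩ := Submodule.mem_span_singleton.1 hs
    obtain ⟨U, hU, rfl⟩ := Submodule.mem_map.1 ht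
    refine ⟨b, U, hU, ?_⟩
    show expAd n _ (b • B n + inE n U) = _
    rw [smul_B_add b U, expAd_apply h𝔯 hT hW b hU]
  · rintro ⟨b, U, hU, rfl⟩
    refine ⟨(b, U, 0), ?_, expAd_apply h𝔯 hT hW b hU⟩
    rw [Submodule.mem_sup]
    refine ⟨b • B n, Submodule.smul_mem _ _ (Submodule.mem_span_singleton_self _),
      inE n U, Submodule.mem_map.2 ⟨U, hU, rfl⟩, smul_B_add b U⟩

lemma mem_RHS (v : S n) :
    v ∈ Submodule.span ℝ {((1, -W, -y) : S n)} ⊔ Submodule.map (inE n) 𝔯 ↔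
      ∃ b U, U ∈ 𝔯 ∧ v = ((b, U - b • W, -(b * y)) : S n) := by
  rw [Submodule.mem_sup]
  constructor
  · rintro ⟨s, hs, t, ht, rfl⟩
    obtain ⟨b, rfl⟩ := Submodule.mem_span_singleton.1 hs
    obtain ⟨U, hU, rfl⟩ := Submodule.mem_map.1 ht
    exact ⟨b, U, hU, smul_one_add b U⟩
  · rintro ⟨b, U, hU, rfl⟩
    refine ⟨b • ((1, -W, -y) : S n), Submodule.smul_mem _ _ (Submodule.mem_span_singleton_self _),
      inE n U, Submodule.mem_map.2 ⟨U, hU, rfl⟩, smul_one_add b U⟩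

lemma sInner_J (h𝔯 : TotallyRealE n 𝔯) (hT : T ∈ 𝔯)
    (hW : ∀ u ∈ 𝔯, ⟪W, u⟫ = 0 ∧ ⟪W, Complex.I • u⟫ = 0)
    {U U' : E n} (hU : U ∈ 𝔯) (hU' : U' ∈ 𝔯) (b b' : ℝ) :
    sInner n (Js n (Fv n T W y b U)) (Fv n T W y b' U') = b' * ⟪T, U⟫ - b * ⟪T, U'⟫ := by
  have hA : ⟪Complex.I • U, U'⟫ = 0 := h𝔯 U hU U' hU'
  have hB : ⟪Complex.I • U, Complex.I • T⟫ = ⟪T, U⟫ := by rw [rII, real_inner_comm]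
  have hC : ⟪Complex.I • U, W⟫ = 0 := by rw [real_inner_comm]; exact (hW U hU).2
  have hE : ⟪T, Complex.I • T⟫ = 0 := by rw [real_inner_comm]; exact h𝔯 T hT T hT
  have hF : ⟪T, W⟫ = 0 := by rw [real_inner_comm]; exact (hW T hT).1
  have hG : ⟪Complex.I • W, U'⟫ = 0 := by rw [rIl]; simpa using (hW U' hU').2
  have hH : ⟪Complex.I • W, Complex.I • T⟫ = 0 := by
    rw [rII]; exact (hW T hT).1
  have hI2 : ⟪Complex.I • W, W⟫ = 0 := rIself W
  have hL : Complex.I • (U - b • (Complex.I • T + W)) =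
      Complex.I • U + b • T - b • (Complex.I • W) := by
    rw [smul_sub, smul_comm Complex.I b, smul_add, smul_smul, Complex.I_mul_I, neg_one_smul]
    module
  rw [Js_apply]
  unfold Fv sInner
  dsimp only
  rw [hL]
  simp only [inner_sub_left, inner_sub_right, inner_add_left, inner_add_right,
    real_inner_smul_left, real_inner_smul_right, hA, hB, hC, hE, hF, hG, hH, hI2]
  ring

lemma maxCS_V (h𝔯 : TotallyRealE n 𝔯) (hT : T ∈ 𝔯)
    (hW : ∀ u ∈ 𝔯, ⟪W, u⟫ = 0 ∧ ⟪W, Complex.I • u⟫ = 0) :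
    ∀ w ∈ maxCS n ((Submodule.map
        (expAd n ((0, (2 : ℝ) • (Complex.I • T) + (2 : ℝ) • W, y) : S n)).toLinearMap
        (Submodule.span ℝ {B n} ⊔ Submodule.map (inE n) 𝔯) : Submodule ℝ (S n)) : Set (S n)),
      w = 0 := by
  rintro w ⟨hw1, hw2⟩
  rw [SetLike.mem_coe] at hw1 hw2
  obtain ⟨b, U, hU, rfl⟩ := (mem_V h𝔯 hT hW _).1 hw1
  obtain ⟨b', U', hU', heq⟩ := (mem_V h𝔯 hT hW _).1 hw2
  rw [Js_apply] at heq
  unfold Fv at heq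
  dsimp only at heq
  rw [Prod.ext_iff] at heq
  obtain ⟨e1, heq2⟩ := heq
  rw [Prod.ext_iff] at heq2
  obtain ⟨e2, e3⟩ := heq2
  dsimp only at e1 e2 e3
  have hL : Complex.I • (U - b • (Complex.I • T + W)) =
      Complex.I • U + b • T - b • (Complex.I • W) := by
    rw [smul_sub, smul_comm Complex.I b, smul_add, smul_smul, Complex.I_mul_I, neg_one_smul]
    module
  rw [hL] at e2
  -- scalar consequences of e2
  have kIUT : ⟪Complex.I • U, T⟫ = 0 := h𝔯 U hU T hT
  have kIWT : ⟪Complex.I • W, T⟫ = 0 := by rw [rIl]; simpa using (hW T hT).2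
  have kITT : ⟪Complex.I • T, T⟫ = 0 := h𝔯 T hT T hT
  have kWT : ⟪W, T⟫ = (0:ℝ) := (hW T hT).1
  have kIUIT : ⟪Complex.I • U, Complex.I • T⟫ = ⟪T, U⟫ := by rw [rII, real_inner_comm]
  have kTIT : ⟪T, Complex.I • T⟫ = 0 := by rw [real_inner_comm]; exact kITT
  have kIWIT : ⟪Complex.I • W, Complex.I • T⟫ = 0 := by rw [rII]; exact kWT
  have kU'IT : ⟪U', Complex.I • T⟫ = 0 := by rw [real_inner_comm]; exact h𝔯 T hT U' hU'
  have kWIT : ⟪W, Complex.I • T⟫ = 0 := (hW T hT).2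
  have f1 := congrArg (fun x => (⟪x, T⟫ : ℝ)) e2
  simp only [inner_sub_left, inner_add_left, real_inner_smul_left, kIUT, kIWT, kITT, kWT] at f1
  -- f1 : 0 + b * ⟪T,T⟫ - b * 0 = ⟪U', T⟫ - b' * 0 - b' * 0
  have f2 := congrArg (fun x => (⟪x, Complex.I • T⟫ : ℝ)) e2
  simp only [inner_sub_left, inner_add_left, real_inner_smul_left, kIUIT, kTIT, kIWIT,
    kU'IT, kWIT] at f2
  -- f2 : ⟪T,U⟫ + b * 0 - b * 0 = 0 - b' * ⟪I•T, I•T⟫ - b' * 0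
  have kITIT : ⟪Complex.I • T, Complex.I • T⟫ = ⟪T, T⟫ := rII T T
  rw [kITIT] at f2
  set t : ℝ := ⟪T, T⟫ with hts
  have ht0 : 0 ≤ t := real_inner_self_nonneg
  have kTU : ⟪T, U⟫ = -(b' * t) := by rw [real_inner_comm] at f2 ⊢; linarith [f2]
  have kTU' : ⟪T, U'⟫ = b * t := by rw [real_inner_comm]; linarith [f1]
  have eq1 : b' * (1 + 2 * t) = b * y := by
    rw [kTU] at e1; linarith [e1]
  have eq2 : b * (1 + 2 * t) = -(b' * y) := by
    rw [kTU'] at e3; linarith [e3]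
  have key : b * ((1 + 2 * t) ^ 2 + y ^ 2) = 0 := by
    linear_combination (1 + 2 * t) * eq2 - y * eq1
  have hpos : (0:ℝ) < (1 + 2 * t) ^ 2 + y ^ 2 := by nlinarith [sq_nonneg y]
  have hb : b = 0 := by
    rcases mul_eq_zero.1 key with h | h
    · exact h
    · exact absurd h (ne_of_gt hpos)
  have hb' : b' = 0 := by
    rw [hb] at eq1
    have h1t : (1 + 2 * t) ≠ 0 := by nlinarith
    have := eq1
    rw [zero_mul] at this
    exact (mul_eq_zero.1 this).resolve_right h1t
  rw [hb, hb'] at e2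
  simp only [zero_smul, add_zero, sub_zero] at e2
  have hU'0 : U' = 0 := by
    have h5 : ⟪U', U'⟫ = (0:ℝ) := by
      nth_rewrite 1 [← e2]
      exact h𝔯 U hU U' hU'
    exact inner_self_eq_zero.1 h5
  have hU0 : U = 0 := by
    have h6 : ⟪U, U⟫ = (0:ℝ) := by
      rw [← rII]
      rw [e2, hU'0]
      simp
    exact inner_self_eq_zero.1 h6
  rw [hb, hU0]
  simp [Fv, Prod.ext_iff]

end Aux

/-- for `𝔯` totally real, `T ∈ 𝔯`, `W ⟂ ℂ𝔯`, `y ∈ ℝ`, the subspace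
`exp(ad(2JT+2W+yZ))(ℝB ⊕ 𝔯)` of `𝔰` is a CR subspace iff `T = 0`; in that case it equals
`ℝ(B − W − yZ) ⊕ 𝔯` and is totally real. -/
theorem statement11 (n : ℕ) (hn : 2 ≤ n) (𝔯 : Submodule ℝ (E n)) (h𝔯 : TotallyRealE n 𝔯)
    (T : E n) (hT : T ∈ 𝔯) (W : E n)
    (hW : ∀ u ∈ 𝔯, ⟪W, u⟫ = 0 ∧ ⟪W, Complex.I • u⟫ = 0) (y : ℝ) :
    (IsCRS n
      ((Submodule.map
          (expAd n ((0, (2 : ℝ) • (Complex.I • T) + (2 : ℝ) • W, y) : S n)).toLinearMap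
          (Submodule.span ℝ {B n} ⊔ Submodule.map (inE n) 𝔯) : Submodule ℝ (S n)) :
        Set (S n)) ↔ T = 0) ∧
    (T = 0 →
      Submodule.map
          (expAd n ((0, (2 : ℝ) • (Complex.I • T) + (2 : ℝ) • W, y) : S n)).toLinearMap
          (Submodule.span ℝ {B n} ⊔ Submodule.map (inE n) 𝔯) =
        Submodule.span ℝ {((1, -W, -y) : S n)} ⊔ Submodule.map (inE n) 𝔯 ∧
      TotallyRealS n
        ((Submodule.map
            (expAd n ((0, (2 : ℝ) • (Complex.I • T) + (2 : ℝ) • W, y) : S n)).toLinearMap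
            (Submodule.span ℝ {B n} ⊔ Submodule.map (inE n) 𝔯) : Submodule ℝ (S n)) :
          Set (S n))) := by
  constructor
  · constructor
    · intro hCR
      have hu := (mem_V (y := y) h𝔯 hT hW _).2 ⟨0, T, hT, rfl⟩
      have hv := (mem_V (y := y) h𝔯 hT hW _).2 ⟨1, 0, 𝔯.zero_mem, rfl⟩
      have vac : ∀ (u : S n), ∀ w ∈ maxCS n
          ((Submodule.map
            (expAd n ((0, (2 : ℝ) • (Complex.I • T) + (2 : ℝ) • W, y) : S n)).toLinearMap
            (Submodule.span ℝ {B n} ⊔ Submodule.map (inE n) 𝔯) : Submodule ℝ (S n)) : Set (S n)),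
          sInner n u w = 0 := by
        intro u w hw
        rw [maxCS_V h𝔯 hT hW w hw]
        simp [sInner]
      have hc := hCR _ hu _ hv (vac _) (vac _)
      rw [sInner_J h𝔯 hT hW hT 𝔯.zero_mem 0 1] at hc
      have h0 : ⟪T, T⟫ = (0:ℝ) := by simpa using hc
      exact inner_self_eq_zero.1 h0
    · intro hT0 u hu v hv _ _
      rw [SetLike.mem_coe] at hu hv
      obtain ⟨b, U, hU, rfl⟩ := (mem_V h𝔯 hT hW _).1 hu
      obtain ⟨b', U', hU', rfl⟩ := (mem_V h𝔯 hT hW _).1 hv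
      rw [sInner_J h𝔯 hT hW hU hU' b b', hT0]
      simp
  · intro hT0
    subst hT0
    constructor
    · ext v
      rw [mem_V h𝔯 hT hW v, mem_RHS v]
      constructor
      · rintro ⟨b, U, hU, rfl⟩
        exact ⟨b, U, hU, by simp [Fv, Prod.ext_iff]⟩
      · rintro ⟨b, U, hU, rfl⟩
        exact ⟨b, U, hU, by simp [Fv, Prod.ext_iff]⟩
    · intro u hu v hv
      rw [SetLike.mem_coe] at hu hv
      obtain ⟨b, U, hU, rfl⟩ := (mem_V h𝔯 hT hW _).1 hu
      obtain ⟨b', U', hU', rfl⟩ := (mem_V h𝔯 hT hW _).1 hv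
      rw [sInner_J h𝔯 hT hW hU hU' b b']
      simp

end CHn
end
end

section
/- For every X ∈ E and every real subspace 𝔴 of E, one has exp(ad(2X))( ℝ(B+X) ⊕ 𝔴 ⊕ ℝZ ) = ℝB ⊕ 𝔴 ⊕ ℝZ. -/
open scoped RealInnerProductSpace

noncomputable section

namespace CHn

variable (n : ℕ)

section Aux

lemma ad_apply'_s14 (X : E n) (q : S n) :
    ad n ((0, (2:ℝ) • X, 0) : S n) q
      = (0, -(q.1 • X), 2 * ⟪Complex.I • X, q.2.1⟫) := by
  show bra n _ q = _
  unfold bra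
  refine Prod.ext rfl (Prod.ext ?_ ?_)
  · show (2⁻¹ : ℝ) • ((0:ℝ) • q.2.1 - q.1 • ((2:ℝ) • X)) = -(q.1 • X)
    module
  · show (0:ℝ) * q.2.2 - q.1 * (0:ℝ) + ⟪Complex.I • ((2:ℝ) • X), q.2.1⟫
        = 2 * ⟪Complex.I • X, q.2.1⟫
    rw [smul_comm, real_inner_smul_left]
    ring

lemma inner_IX_X (X : E n) : ⟪Complex.I • X, X⟫ = 0 := by
  simp only [PiLp.inner_apply, RCLike.inner_apply, PiLp.smul_apply, Complex.real_smul,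
    map_mul, Complex.mul_re, Complex.conj_re, Complex.conj_im, Complex.smul_re,
    Complex.smul_im]
  simp
  rw [sub_eq_zero]
  exact Finset.sum_congr rfl fun i _ => mul_comm _ _

set_option maxHeartbeats 1000000 in
set_option synthInstance.maxHeartbeats 400000 in
lemma ad_sq (X : E n) : ad n ((0, (2:ℝ) • X, 0) : S n) ^ 2 = 0 := by
  refine ContinuousLinearMap.ext fun q => ?_
  rw [pow_two, ContinuousLinearMap.mul_apply, ad_apply'_s14, ad_apply'_s14]
  have h : ⟪Complex.I • X, -(q.1 • X)⟫ = 0 := by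
    rw [inner_neg_right, real_inner_smul_right, inner_IX_X]
    simp
  show ((0:ℝ), -((0:ℝ) • X), 2 * ⟪Complex.I • X, -(q.1 • X)⟫) = (0 : S n)
  rw [h]
  refine Prod.ext rfl (Prod.ext ?_ ?_) <;> simp

set_option maxHeartbeats 1000000 in
set_option synthInstance.maxHeartbeats 400000 in
lemma expAd_apply_s14 (X : E n) (p : S n) :
    expAd n ((0, (2:ℝ) • X, 0) : S n) p
      = (p.1, p.2.1 - p.1 • X, p.2.2 + 2 * ⟪Complex.I • X, p.2.1⟫) := by
  set A := ad n ((0, (2:ℝ) • X, 0) : S n) with hA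
  have hexp : NormedSpace.exp A = 1 + A := by
    rw [NormedSpace.exp_eq_tsum ℝ]
    show (∑' k : ℕ, ((k.factorial : ℝ)⁻¹) • A ^ k) = 1 + A
    have hz : ∀ k ∉ ({0, 1} : Finset ℕ), ((k.factorial : ℝ)⁻¹) • A ^ k = 0 := by
      intro k hk
      have hk2 : 2 ≤ k := by
        simp only [Finset.mem_insert, Finset.mem_singleton] at hk
        omega
      have hpow : A ^ k = A ^ 2 * A ^ (k - 2) := by
        rw [← pow_add]
        congr 1
        omega
      rw [hpow, ad_sq, zero_mul, smul_zero]
    rw [tsum_eq_sum hz]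
    rw [Finset.sum_insert (by decide), Finset.sum_singleton]
    simp
  show NormedSpace.exp A p = _
  rw [hexp]
  rw [ContinuousLinearMap.add_apply, ContinuousLinearMap.one_apply, ad_apply'_s14]
  refine Prod.ext ?_ (Prod.ext ?_ ?_)
  · simp
  · show p.2.1 + -(p.1 • X) = p.2.1 - p.1 • X
    abel
  · rfl

end Aux

/-- for every `X ∈ E` and every real subspace `𝔴` of `E`:
`exp(ad(2X))(ℝ(B+X) ⊕ 𝔴 ⊕ ℝZ) = ℝB ⊕ 𝔴 ⊕ ℝZ`. -/
theorem statement14 (n : ℕ) (hn : 2 ≤ n) (X : E n) (𝔴 : Submodule ℝ (E n)) :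
    Submodule.map (expAd n ((0, (2 : ℝ) • X, 0) : S n)).toLinearMap
        (Submodule.span ℝ {((1, X, 0) : S n)} ⊔ Submodule.map (inE n) 𝔴 ⊔
          Submodule.span ℝ {Z n}) =
      Submodule.span ℝ {B n} ⊔ Submodule.map (inE n) 𝔴 ⊔ Submodule.span ℝ {Z n} := by
  set f := (expAd n ((0, (2 : ℝ) • X, 0) : S n)).toLinearMap with hf
  have hfap : ∀ p : S n, f p = (p.1, p.2.1 - p.1 • X, p.2.2 + 2 * ⟪Complex.I • X, p.2.1⟫) :=
    fun p => expAd_apply_s14 n X p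
  have hfv : f ((1, X, 0) : S n) = B n := by
    rw [hfap]
    simp [B, inner_IX_X n X]
  have hfZ : f (Z n) = Z n := by
    rw [hfap]
    simp [Z]
  have hfw : ∀ w : E n, f ((0, w, 0) : S n)
      = inE n w + (2 * ⟪Complex.I • X, w⟫) • Z n := by
    intro w
    rw [hfap]
    refine Prod.ext ?_ (Prod.ext ?_ ?_) <;> simp [inE, Z]
  set M := Submodule.span ℝ {((1, X, 0) : S n)} ⊔ Submodule.map (inE n) 𝔴 ⊔
      Submodule.span ℝ {Z n} with hM
  have hvM : ((1, X, 0) : S n) ∈ M :=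
    Submodule.mem_sup_left (Submodule.mem_sup_left (Submodule.mem_span_singleton_self _))
  have hZM : Z n ∈ M := Submodule.mem_sup_right (Submodule.mem_span_singleton_self _)
  have hwM : ∀ w ∈ 𝔴, inE n w ∈ M := fun w hw =>
    Submodule.mem_sup_left (Submodule.mem_sup_right ⟨w, hw, rfl⟩)
  have hZR : Z n ∈ Submodule.span ℝ {B n} ⊔ Submodule.map (inE n) 𝔴 ⊔
      Submodule.span ℝ {Z n} :=
    Submodule.mem_sup_right (Submodule.mem_span_singleton_self _)
  apply le_antisymm
  · refine Submodule.map_le_iff_le_comap.2 (sup_le (sup_le ?_ ?_) ?_)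
    · rw [Submodule.span_le]
      rintro x rfl
      refine Submodule.mem_comap.2 ?_
      rw [hfv]
      exact Submodule.mem_sup_left (Submodule.mem_sup_left
        (Submodule.mem_span_singleton_self (B n)))
    · rintro x ⟨w, hw, rfl⟩
      have : f (inE n w) = inE n w + (2 * ⟪Complex.I • X, w⟫) • Z n := hfw w
      refine Submodule.mem_comap.2 ?_
      rw [show (inE n w : S n) = ((0, w, 0) : S n) from rfl] at this ⊢
      rw [this]
      exact add_mem (Submodule.mem_sup_left (Submodule.mem_sup_right ⟨w, hw, rfl⟩))
        (Submodule.smul_mem _ _ hZR)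
    · rw [Submodule.span_le]
      rintro x rfl
      refine Submodule.mem_comap.2 ?_
      rw [hfZ]
      exact hZR
  · refine sup_le (sup_le ?_ ?_) ?_
    · rw [Submodule.span_le]
      rintro x rfl
      exact ⟨(1, X, 0), hvM, hfv⟩
    · rintro x ⟨w, hw, rfl⟩
      refine ⟨(0, w, 0) + (-(2 * ⟪Complex.I • X, w⟫)) • Z n, ?_, ?_⟩
      · exact add_mem (hwM w hw) (Submodule.smul_mem _ _ hZM)
      · rw [map_add, map_smul, hfZ, show f ((0, w, 0) : S n)
          = inE n w + (2 * ⟪Complex.I • X, w⟫) • Z n from hfw w]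
        rw [show (inE n w : S n) = ((0, w, 0) : S n) from rfl]
        module
    · rw [Submodule.span_le]
      rintro x rfl
      exact ⟨Z n, hZM, hfZ⟩


end CHn
end
end

section
/- Let 𝔴 be a real subspace of E and let X ∈ E be orthogonal to 𝔴. If the subspace 𝔥 = ℝ(B+X) ⊕ 𝔴 ⊕ ℝZ is a CR subspace of 𝔰, then JX ∈ 𝔴 and 𝔴 is a CR subspace of E. -/
open scoped RealInnerProductSpace

noncomputable section

namespace CHn

variable (n : ℕ)

-- AUX
lemma inner_I_smul_left (n : ℕ) (U V : E n) : ⟪Complex.I • U, V⟫ = - ⟪U, Complex.I • V⟫ := by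
  simp only [PiLp.inner_apply, PiLp.smul_apply, Complex.inner, ← Finset.sum_neg_distrib,
    smul_eq_mul]
  refine Finset.sum_congr rfl fun i _ => ?_
  simp [Complex.mul_re, Complex.conj_re, Complex.conj_im]
  ring

lemma Js_apply_s15 (n : ℕ) (p : S n) : Js n p = (-p.2.2, Complex.I • p.2.1, p.1) := rfl
lemma inE_apply (n : ℕ) (U : E n) : inE n U = (0, U, 0) := rfl
lemma sInner_apply (n : ℕ) (p q : S n) :
    sInner n p q = p.1 * q.1 + ⟪p.2.1, q.2.1⟫ + p.2.2 * q.2.2 := rfl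

def eqv (n : ℕ) : WithLp 2 (ℝ × WithLp 2 ((E n) × ℝ)) ≃ₗ[ℝ] S n :=
  (WithLp.linearEquiv 2 ℝ _).trans ((LinearEquiv.refl ℝ ℝ).prodCongr (WithLp.linearEquiv 2 ℝ _))

lemma sInner_eqv (n : ℕ) (x y : WithLp 2 (ℝ × WithLp 2 ((E n) × ℝ))) :
    ⟪x, y⟫ = sInner n (eqv n x) (eqv n y) := by
  rw [WithLp.prod_inner_apply, WithLp.prod_inner_apply]
  simp [sInner, eqv, RCLike.inner_apply]
  ring

lemma sInner_eq_inner (n : ℕ) (u v : S n) :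
    sInner n u v = ⟪(eqv n).symm u, (eqv n).symm v⟫ := by
  rw [sInner_eqv]; simp

lemma exists_proj (n : ℕ) (M : Submodule ℝ (S n)) (v : S n) :
    ∃ m ∈ M, ∃ p, v = m + p ∧ ∀ h ∈ M, sInner n p h = 0 := by
  obtain ⟨y, hy, z, hz, hvyz⟩ :=
    (M.comap ((eqv n) : _ →ₗ[ℝ] S n)).exists_add_mem_mem_orthogonal ((eqv n).symm v)
  refine ⟨eqv n y, Submodule.mem_comap.mp hy, eqv n z, ?_, ?_⟩
  · have := congrArg (eqv n) hvyz
    simpa using this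
  · intro h hh
    rw [sInner_eq_inner]
    have hh2 : (eqv n).symm h ∈ M.comap ((eqv n) : _ →ₗ[ℝ] S n) := by
      simp [Submodule.mem_comap, hh]
    have h0 := (Submodule.mem_orthogonal _ _).mp hz ((eqv n).symm h) hh2
    simp only [LinearEquiv.symm_apply_apply]
    rw [real_inner_comm]
    exact h0

lemma sInner_self_zero (n : ℕ) (p : S n) (h : sInner n p p = 0) : p = 0 := by
  have h1 : (0:ℝ) ≤ p.1 * p.1 := mul_self_nonneg _
  have h2 : (0:ℝ) ≤ ⟪p.2.1, p.2.1⟫ := real_inner_self_nonneg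
  have h3 : (0:ℝ) ≤ p.2.2 * p.2.2 := mul_self_nonneg _
  rw [sInner_apply] at h
  have e1 : p.1 = 0 := by nlinarith
  have e3 : p.2.2 = 0 := by nlinarith
  have e2 : p.2.1 = 0 := by
    have : ⟪p.2.1, p.2.1⟫ = (0:ℝ) := by nlinarith
    exact inner_self_eq_zero.mp this
  exact Prod.ext e1 (Prod.ext e2 e3)

lemma comb_eq (n : ℕ) (X : E n) (a x : ℝ) (w : E n) :
    a • ((1, X, 0) : S n) + inE n w + x • Z n = (a, a • X + w, x) := by
  refine Prod.ext ?_ (Prod.ext ?_ ?_) <;>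
    simp [inE_apply, Z, Prod.smul_mk]

lemma mem_h_iff (n : ℕ) (𝔴 : Submodule ℝ (E n)) (X : E n) (p : S n) :
    p ∈ (Submodule.span ℝ {((1, X, 0) : S n)} ⊔ Submodule.map (inE n) 𝔴 ⊔
      Submodule.span ℝ {Z n} : Submodule ℝ (S n)) ↔
    ∃ a x : ℝ, ∃ w ∈ 𝔴, p = (a, a • X + w, x) := by
  constructor
  · intro hp
    obtain ⟨q, hq, r, hr, rfl⟩ := Submodule.mem_sup.mp hp
    obtain ⟨s, hs, t, ht, rfl⟩ := Submodule.mem_sup.mp hq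
    obtain ⟨a, rfl⟩ := Submodule.mem_span_singleton.mp hs
    obtain ⟨w, hw, rfl⟩ := Submodule.mem_map.mp ht
    obtain ⟨x, rfl⟩ := Submodule.mem_span_singleton.mp hr
    exact ⟨a, x, w, hw, (comb_eq n X a x w)⟩
  · rintro ⟨a, x, w, hw, rfl⟩
    rw [← comb_eq n X a x w]
    refine add_mem (add_mem ?_ ?_) ?_
    · exact Submodule.mem_sup_left (Submodule.mem_sup_left
        (Submodule.smul_mem _ _ (Submodule.mem_span_singleton_self _)))
    · exact Submodule.mem_sup_left (Submodule.mem_sup_right ⟨w, hw, rfl⟩)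
    · exact Submodule.mem_sup_right (Submodule.smul_mem _ _ (Submodule.mem_span_singleton_self _))


/-- for `𝔴` a real subspace of `E` and `X ∈ E` orthogonal to `𝔴`, if
`𝔥 = ℝ(B+X) ⊕ 𝔴 ⊕ ℝZ` is a CR subspace of `𝔰`, then `JX ∈ 𝔴` and `𝔴` is a CR subspace of `E`. -/
theorem statement15 (n : ℕ) (hn : 2 ≤ n) (𝔴 : Submodule ℝ (E n)) (X : E n)
    (hX : ∀ u ∈ 𝔴, ⟪X, u⟫ = 0)
    (hCR : IsCRS n
      ((Submodule.span ℝ {((1, X, 0) : S n)} ⊔ Submodule.map (inE n) 𝔴 ⊔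
        Submodule.span ℝ {Z n} : Submodule ℝ (S n)) : Set (S n))) :
    Complex.I • X ∈ 𝔴 ∧ IsCRE n 𝔴 := by
  set H : Submodule ℝ (S n) := Submodule.span ℝ {((1, X, 0) : S n)} ⊔
    Submodule.map (inE n) 𝔴 ⊔ Submodule.span ℝ {Z n} with hHdef
  have memH : ∀ p : S n, p ∈ H ↔ ∃ a x : ℝ, ∃ w ∈ 𝔴, p = (a, a • X + w, x) :=
    fun p => mem_h_iff n 𝔴 X p
  set M : Submodule ℝ (S n) := H ⊓ Submodule.comap (Js n) H with hMdef
  have hmaxCS : ∀ p : S n, p ∈ maxCS n (H : Set (S n)) ↔ p ∈ M := by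
    intro p
    simp [maxCS, hMdef, Submodule.mem_inf, Submodule.mem_comap, SetLike.mem_coe]
  have JsJs : ∀ p : S n, Js n (Js n p) = -p := fun p => by
    refine Prod.ext ?_ (Prod.ext ?_ ?_) <;>
      simp [Js_apply_s15, smul_smul, Complex.I_mul_I]
  have JM : ∀ h ∈ M, Js n h ∈ M := by
    intro h hh
    obtain ⟨h1, h2⟩ := Submodule.mem_inf.mp hh
    refine Submodule.mem_inf.mpr ⟨Submodule.mem_comap.mp h2, Submodule.mem_comap.mpr ?_⟩
    rw [JsJs]; exact neg_mem h1
  have skew : ∀ u v : S n, sInner n (Js n u) v = - sInner n u (Js n v) := by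
    intro u v
    simp only [sInner_apply, Js_apply_s15, inner_I_smul_left n]
    ring
  have addR : ∀ u v w : S n, sInner n u (v + w) = sInner n u v + sInner n u w := by
    intro u v w
    simp only [sInner_apply, Prod.fst_add, Prod.snd_add, inner_add_right]
    ring
  have hBXH : ((1, X, 0) : S n) ∈ H := (memH _).mpr ⟨1, 0, 0, 𝔴.zero_mem, by simp⟩
  have hZH : Z n ∈ H := (memH _).mpr ⟨0, 1, 0, 𝔴.zero_mem, by simp [Z]⟩
  obtain ⟨m₁, hm₁, p₁, hv1, hp₁⟩ := exists_proj n M ((1, X, 0) : S n)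
  obtain ⟨m₂, hm₂, p₂, hv2, hp₂⟩ := exists_proj n M (Z n)
  have hp₁H : p₁ ∈ H := by
    have h : p₁ = (1, X, 0) - m₁ := by rw [hv1]; abel
    rw [h]; exact sub_mem hBXH (Submodule.mem_inf.mp hm₁).1
  have hp₂H : p₂ ∈ H := by
    have h : p₂ = Z n - m₂ := by rw [hv2]; abel
    rw [h]; exact sub_mem hZH (Submodule.mem_inf.mp hm₂).1
  have horth1 : ∀ w ∈ maxCS n (H : Set (S n)), sInner n p₁ w = 0 := by
    intro w hw; exact hp₁ w ((hmaxCS w).mp hw)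
  have horth2 : ∀ w ∈ maxCS n (H : Set (S n)), sInner n p₂ w = 0 := by
    intro w hw; exact hp₂ w ((hmaxCS w).mp hw)
  have hcr := hCR p₁ hp₁H p₂ hp₂H horth1 horth2
  have h5 : sInner n (Js n p₁) (Z n) = p₁.1 := by
    simp [sInner_apply, Js_apply_s15, Z]
  have h5' : sInner n (Js n p₁) (Z n) = 0 := by
    rw [hv2, addR]
    have e1 : sInner n (Js n p₁) m₂ = 0 := by
      rw [skew]
      rw [hp₁ (Js n m₂) (JM _ hm₂)]
      ring
    rw [e1, hcr, add_zero]
  have hp11 : p₁.1 = 0 := by rw [← h5, h5']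
  obtain ⟨a, x, w, hw, hrep⟩ := (memH p₁).mp hp₁H
  have ha : a = 0 := by
    have := congrArg Prod.fst hrep
    simp only [hp11] at this
    exact this.symm
  have h7 : sInner n p₁ ((1, X, 0) : S n) = 0 := by
    rw [hrep, ha]
    simp only [sInner_apply, zero_smul, zero_add, zero_mul, mul_zero, add_zero]
    rw [real_inner_comm]
    exact hX w hw
  have h8 : sInner n p₁ p₁ = 0 := by
    have e := addR p₁ m₁ p₁
    rw [← hv1, h7, hp₁ m₁ hm₁, zero_add] at e
    exact e.symm
  have hp10 : p₁ = 0 := sInner_self_zero n p₁ h8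
  have hBXM : ((1, X, 0) : S n) ∈ M := by
    rw [hv1, hp10, add_zero]; exact hm₁
  have hJsBX : Js n ((1, X, 0) : S n) = ((0, Complex.I • X, 1) : S n) := by
    refine Prod.ext ?_ (Prod.ext ?_ ?_) <;> simp [Js_apply_s15]
  have hJBXM : ((0, Complex.I • X, 1) : S n) ∈ M := by
    rw [← hJsBX]; exact JM _ hBXM
  have hIX : Complex.I • X ∈ 𝔴 := by
    obtain ⟨a', x', w', hw', heq⟩ := (memH _).mp (Submodule.mem_inf.mp hJBXM).1
    have ha' : a' = 0 := (congrArg Prod.fst heq).symm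
    have h21 : Complex.I • X = w' := by
      have := congrArg (fun p : S n => p.2.1) heq
      simpa [ha'] using this
    rw [h21]; exact hw'
  refine ⟨hIX, ?_⟩
  intro u hu v hv huo hvo
  have key : ∀ u' : E n, u' ∈ 𝔴 → (∀ w₀ ∈ maxCE n 𝔴, ⟪u', w₀⟫ = 0) →
      ∀ h ∈ maxCS n (H : Set (S n)),
        sInner n ((0, u', -⟪u', Complex.I • X⟫) : S n) h = 0 := by
    intro u' hu' hou h hh
    have hhM : h ∈ M := (hmaxCS h).mp hh
    obtain ⟨a, x, w, hw, hrep⟩ := (memH h).mp (Submodule.mem_inf.mp hhM).1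
    have hw₀ : w - x • (Complex.I • X) ∈ 𝔴 :=
      sub_mem hw (Submodule.smul_mem _ _ hIX)
    have h₀M : ((0, w - x • (Complex.I • X), 0) : S n) ∈ M := by
      have he : ((0, w - x • (Complex.I • X), 0) : S n)
          = h - a • ((1, X, 0) : S n) - x • ((0, Complex.I • X, 1) : S n) := by
        rw [hrep]
        refine Prod.ext ?_ (Prod.ext ?_ ?_) <;> simp <;> abel
      rw [he]
      exact sub_mem (sub_mem hhM (Submodule.smul_mem _ _ hBXM))
        (Submodule.smul_mem _ _ hJBXM)
    have hIw₀ : Complex.I • (w - x • (Complex.I • X)) ∈ 𝔴 := by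
      have hJH : Js n ((0, w - x • (Complex.I • X), 0) : S n) ∈ H :=
        Submodule.mem_comap.mp (Submodule.mem_inf.mp h₀M).2
      obtain ⟨a', x', w', hw', heq⟩ := (memH _).mp hJH
      have ha' : a' = 0 := by
        have := congrArg Prod.fst heq
        simpa [Js_apply_s15] using this.symm
      have h21 : Complex.I • (w - x • (Complex.I • X)) = w' := by
        have := congrArg (fun p : S n => p.2.1) heq
        simpa [Js_apply_s15, ha'] using this
      rw [h21]; exact hw'
    have hmce : w - x • (Complex.I • X) ∈ maxCE n 𝔴 := ⟨hw₀, hIw₀⟩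
    rw [hrep]
    show 0 * a + ⟪u', a • X + w⟫ + (-⟪u', Complex.I • X⟫) * x = 0
    have hwdec : w = (w - x • (Complex.I • X)) + x • (Complex.I • X) := by abel
    rw [hwdec, inner_add_right, inner_add_right, real_inner_smul_right,
      real_inner_smul_right]
    have h1 : ⟪u', X⟫ = 0 := by rw [real_inner_comm]; exact hX u' hu'
    have h2 : ⟪u', w - x • (Complex.I • X)⟫ = 0 := hou _ hmce
    rw [h1, h2]
    ring
  have huhatH : ((0, u, -⟪u, Complex.I • X⟫) : S n) ∈ H :=
    (memH _).mpr ⟨0, -⟪u, Complex.I • X⟫, u, hu, by simp⟩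
  have hvhatH : ((0, v, -⟪v, Complex.I • X⟫) : S n) ∈ H :=
    (memH _).mpr ⟨0, -⟪v, Complex.I • X⟫, v, hv, by simp⟩
  have hres := hCR _ huhatH _ hvhatH (key u hu huo) (key v hv hvo)
  have hfin : sInner n (Js n ((0, u, -⟪u, Complex.I • X⟫) : S n))
      ((0, v, -⟪v, Complex.I • X⟫) : S n) = ⟪Complex.I • u, v⟫ := by
    simp [sInner_apply, Js_apply_s15]
  rw [hfin] at hres
  exact hres

end CHn
end
end

section
/- For every real number a ≥ 5, the map F: [0,∞) × [0,∞) → [0,∞) × [0,∞) defined by F(z,w) = ( (z+w)/(1+z+w), z(a(1+z) + (a+3)w)/(1+z+w)² ) is injective. -/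
/-- For every real `a ≥ 5`, the map
`F(z,w) = ((z+w)/(1+z+w), z(a(1+z) + (a+3)w)/(1+z+w)²)` is injective on `[0,∞) × [0,∞)`. -/
theorem statement17 (a : ℝ) (ha : 5 ≤ a) :
    Set.InjOn
      (fun p : ℝ × ℝ =>
        ((p.1 + p.2) / (1 + p.1 + p.2),
          p.1 * (a * (1 + p.1) + (a + 3) * p.2) / (1 + p.1 + p.2) ^ 2))
      (Set.Ici 0 ×ˢ Set.Ici 0) := by
  rintro ⟨z1, w1⟩ ⟨hz1, hw1⟩ ⟨z2, w2⟩ ⟨hz2, hw2⟩ h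
  simp only [Set.mem_Ici] at hz1 hw1 hz2 hw2
  have h1 := congrArg Prod.fst h
  have h2 := congrArg Prod.snd h
  simp only at h1 h2
  have d1 : (0:ℝ) < 1 + z1 + w1 := by linarith
  have d2 : (0:ℝ) < 1 + z2 + w2 := by linarith
  have hs : z1 + w1 = z2 + w2 := by
    rw [div_eq_div_iff d1.ne' d2.ne'] at h1
    nlinarith
  have hd : 1 + z1 + w1 = 1 + z2 + w2 := by linarith
  rw [hd] at h2
  have h2' : z1 * (a * (1 + z1) + (a + 3) * w1) = z2 * (a * (1 + z2) + (a + 3) * w2) := by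
    field_simp [d2.ne'] at h2
    exact h2
  have hK : 0 < a + (a + 3) * (z1 + w1) - 3 * (z1 + z2) := by
    have ha3 : (0:ℝ) ≤ (a - 3) * (z1 + w1) :=
      mul_nonneg (by linarith) (by linarith)
    have hz2le : z2 ≤ z1 + w1 := by linarith
    nlinarith
  have hfac : (z1 - z2) * (a + (a + 3) * (z1 + w1) - 3 * (z1 + z2)) = 0 := by
    linear_combination h2' - (a + 3) * z2 * hs
  have hz : z1 = z2 := by
    rcases mul_eq_zero.mp hfac with h0 | h0
    · linarith
    · linarith
  have hw : w1 = w2 := by linarith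
  simp [hz, hw]
end
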